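/- Nonnegativity for the one-sided Dirichlet problem: let 0 < α < 1, a < b real numbers, and φ a Schwartz function with (D_right)^α φ(x) ≥ 0 for all x ∈ [a,b) and φ(x) = 0 for all x ≥ b. Then φ(x) ≥ 0 for all x ≥ a. -/

import Mathlib

open Real MeasureTheory

/-- The right fractional derivative of order `α`:
`(D_right)^α φ(x) = (1/Γ(-α)) ∫_x^∞ (φ(t) - φ(x))/(t-x)^{1+α} dt`. -/
noncomputable def Dright (α : ℝ) (φ : ℝ → ℝ) (x : ℝ) : ℝ :=
  (1 / Real.Gamma (-α)) * ∫ t in Set.Ioi x, (φ t - φ x) / (t - x) ^ (1 + α)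

lemma aux_int_Ioi (x₀ c s : ℝ) (hs : s < -1) (hc : x₀ < c) :
    IntegrableOn (fun t => (t - x₀) ^ s) (Set.Ioi c) := by
  have h0 : (0:ℝ) < c - x₀ := by linarith
  have h := integrableOn_Ioi_rpow_of_lt hs h0
  have hmp : MeasurePreserving (fun t : ℝ => t - x₀) volume volume :=
    measurePreserving_sub_right volume x₀
  have hemb : MeasurableEmbedding (fun t : ℝ => t - x₀) :=
    (MeasurableEquiv.subRight x₀).measurableEmbedding
  have h2 := (hmp.integrableOn_comp_preimage hemb).mpr h
  have hpre : (fun t : ℝ => t - x₀) ⁻¹' Set.Ioi (c - x₀) = Set.Ioi c := by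
    ext u; simp [sub_lt_sub_iff_right]
  rwa [hpre] at h2

lemma aux_int_Ioo (x₀ c s : ℝ) (hs : -1 < s) (hc : x₀ < c) :
    IntegrableOn (fun t => (t - x₀) ^ s) (Set.Ioo x₀ c) := by
  have h0 : (0:ℝ) < c - x₀ := by linarith
  have h := (intervalIntegral.integrableOn_Ioo_rpow_iff h0).mpr hs
  have hmp : MeasurePreserving (fun t : ℝ => t - x₀) volume volume :=
    measurePreserving_sub_right volume x₀
  have hemb : MeasurableEmbedding (fun t : ℝ => t - x₀) :=
    (MeasurableEquiv.subRight x₀).measurableEmbedding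
  have h2 := (hmp.integrableOn_comp_preimage hemb).mpr h
  have hpre : (fun t : ℝ => t - x₀) ⁻¹' Set.Ioo 0 (c - x₀) = Set.Ioo x₀ c := by
    ext u; simp [sub_lt_sub_iff_right, sub_pos]
  rwa [hpre] at h2

/-- Nonnegativity for the one-sided Dirichlet problem. -/
theorem dirichlet_nonneg (α : ℝ) (hα : 0 < α) (hα1 : α < 1)
    (a b : ℝ) (hab : a < b) (φ : SchwartzMap ℝ ℝ)
    (hf : ∀ x ∈ Set.Ico a b, 0 ≤ Dright α (fun y => φ y) x)
    (hb : ∀ x, b ≤ x → φ x = 0) :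
    ∀ x, a ≤ x → 0 ≤ φ x := by
  intro x hax
  by_contra hneg
  push_neg at hneg
  have hxb : x < b := by
    by_contra h
    push_neg at h
    rw [hb x h] at hneg; linarith
  obtain ⟨x₀, hx₀mem, hmin⟩ :=
    isCompact_Icc.exists_isMinOn (Set.nonempty_Icc.mpr hab.le) φ.continuous.continuousOn
  have hminle : ∀ y ∈ Set.Icc a b, φ x₀ ≤ φ y := fun y hy => hmin hy
  have hφx₀ : φ x₀ < 0 := lt_of_le_of_lt (hminle x ⟨hax, hxb.le⟩) hneg
  have hx₀b : x₀ < b := by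
    rcases lt_or_eq_of_le hx₀mem.2 with h | h
    · exact h
    · rw [h, hb b le_rfl] at hφx₀; linarith
  set g : ℝ → ℝ := fun t => (φ t - φ x₀) / (t - x₀) ^ (1 + α) with hgdef
  have hnum : ∀ t, x₀ < t → 0 ≤ φ t - φ x₀ := by
    intro t ht
    rcases le_or_gt t b with h | h
    · have := hminle t ⟨le_trans hx₀mem.1 ht.le, h⟩; linarith
    · rw [hb t h.le]; linarith
  have hden : ∀ t, x₀ < t → (0:ℝ) < (t - x₀) ^ (1 + α) := by
    intro t ht
    exact Real.rpow_pos_of_pos (by linarith) _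
  have hgnn : ∀ t ∈ Set.Ioi x₀, 0 ≤ g t := fun t ht =>
    div_nonneg (hnum t ht) (hden t ht).le
  -- bound on φ
  obtain ⟨M, hM0, hM⟩ := φ.decay 0 0
  simp only [pow_zero, one_mul, norm_iteratedFDeriv_zero] at hM
  -- bound on deriv φ
  obtain ⟨L, hL0, hL⟩ := (SchwartzMap.derivCLM ℝ ℝ φ).decay 0 0
  simp only [pow_zero, one_mul, norm_iteratedFDeriv_zero, SchwartzMap.derivCLM_apply] at hL
  have hlip : ∀ t : ℝ, |φ t - φ x₀| ≤ L * |t - x₀| := by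
    intro t
    have := convex_univ.norm_image_sub_le_of_norm_deriv_le
      (f := fun y : ℝ => φ y) (fun y _ => φ.differentiableAt)
      (fun y _ => hL y) (Set.mem_univ x₀) (Set.mem_univ t)
    simpa [Real.norm_eq_abs] using this
  -- continuity of g on Ioi x₀
  have hgcont : ContinuousOn g (Set.Ioi x₀) := by
    apply ContinuousOn.div
    · exact (φ.continuous.sub continuous_const).continuousOn
    · exact ((continuous_id.sub continuous_const).continuousOn).rpow_const
        (fun t ht => Or.inl (by simp only [Set.mem_Ioi] at ht; intro h; have h' : t - x₀ = 0 := h; linarith [sub_pos.mpr ht]))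
    · intro t ht; exact (hden t ht).ne'
  -- integrability near x₀
  have hmeas1 : AEStronglyMeasurable g (volume.restrict (Set.Ioo x₀ (x₀ + 1))) :=
    (hgcont.mono Set.Ioo_subset_Ioi_self).aestronglyMeasurable measurableSet_Ioo
  have hint1 : IntegrableOn g (Set.Ioo x₀ (x₀ + 1)) := by
    refine Integrable.mono' ((aux_int_Ioo x₀ (x₀+1) (-α) (by linarith) (by linarith)).const_mul L)
      hmeas1 ?_
    refine (ae_restrict_iff' measurableSet_Ioo).mpr (ae_of_all _ fun t ht => ?_)
    have htx : (0:ℝ) < t - x₀ := sub_pos.mpr ht.1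
    have h1 : ‖g t‖ = |φ t - φ x₀| / (t - x₀) ^ (1 + α) := by
      rw [hgdef]
      simp only [Real.norm_eq_abs, abs_div, abs_of_pos (hden t ht.1)]
    rw [h1]
    have h2 : |φ t - φ x₀| / (t - x₀) ^ (1 + α) ≤ (L * (t - x₀)) / (t - x₀) ^ (1 + α) := by
      apply div_le_div_of_nonneg_right ?_ (hden t ht.1).le
      · calc |φ t - φ x₀| ≤ L * |t - x₀| := hlip t
          _ = L * (t - x₀) := by rw [abs_of_pos htx]
    refine h2.trans_eq ?_
    rw [Real.rpow_add htx, Real.rpow_one, Real.rpow_neg htx.le]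
    have hαpos : (0:ℝ) < (t - x₀) ^ α := Real.rpow_pos_of_pos htx α
    field_simp
  -- integrability at infinity
  have hmeas2 : AEStronglyMeasurable g (volume.restrict (Set.Ioi (x₀ + 1))) :=
    (hgcont.mono (Set.Ioi_subset_Ioi (by linarith))).aestronglyMeasurable measurableSet_Ioi
  have hint2 : IntegrableOn g (Set.Ioi (x₀ + 1)) := by
    refine Integrable.mono'
      ((aux_int_Ioi x₀ (x₀+1) (-(1+α)) (by linarith) (by linarith)).const_mul (M + M)) hmeas2 ?_
    refine (ae_restrict_iff' measurableSet_Ioi).mpr (ae_of_all _ fun t ht => ?_)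
    have ht' : x₀ < t := by simp only [Set.mem_Ioi] at ht; linarith
    have htx : (0:ℝ) < t - x₀ := sub_pos.mpr ht'
    have h1 : ‖g t‖ = |φ t - φ x₀| / (t - x₀) ^ (1 + α) := by
      rw [hgdef]
      simp only [Real.norm_eq_abs, abs_div, abs_of_pos (hden t ht')]
    rw [h1]
    have h2 : |φ t - φ x₀| ≤ M + M := by
      calc |φ t - φ x₀| ≤ |φ t| + |φ x₀| := abs_sub _ _
        _ ≤ M + M := by
            have := hM t; have := hM x₀
            simp only [Real.norm_eq_abs] at *
            linarith
    calc |φ t - φ x₀| / (t - x₀) ^ (1 + α) ≤ (M + M) / (t - x₀) ^ (1 + α) :=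
          div_le_div_of_nonneg_right h2 (hden t ht').le |>.trans_eq rfl
      _ = (M + M) * (t - x₀) ^ (-(1 + α)) := by
          rw [Real.rpow_neg htx.le, div_eq_mul_inv]
  -- integrability on Ioi x₀
  have hint : IntegrableOn g (Set.Ioi x₀) := by
    rw [← Set.Ioc_union_Ioi_eq_Ioi (show x₀ ≤ x₀ + 1 by linarith)]
    exact ((integrableOn_Ioc_iff_integrableOn_Ioo).mpr hint1).union hint2
  -- positivity of the integral
  have hpos : 0 < ∫ t in Set.Ioi x₀, g t := by
    rw [setIntegral_pos_iff_support_of_nonneg_ae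
      ((ae_restrict_iff' measurableSet_Ioi).mpr (ae_of_all _ hgnn)) hint]
    refine lt_of_lt_of_le ?_ (measure_mono (show Set.Ioi b ⊆ _ from ?_))
    · rw [Real.volume_Ioi]; exact ENNReal.zero_lt_top
    · intro t ht
      simp only [Set.mem_Ioi] at ht
      have ht' : x₀ < t := lt_trans hx₀b ht
      constructor
      · apply Function.mem_support.mpr
        have : g t = (0 - φ x₀) / (t - x₀) ^ (1 + α) := by
          rw [hgdef]; simp [hb t ht.le]
        rw [this]
        exact ne_of_gt (div_pos (by linarith) (hden t ht'))
      · exact ht'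
  -- Gamma is negative
  have hΓ : Real.Gamma (-α) < 0 := by
    have h1 : 0 < Real.Gamma (1 - α) := Real.Gamma_pos_of_pos (by linarith)
    have h2 := Real.Gamma_add_one (show (-α) ≠ 0 by linarith)
    rw [show (-α) + 1 = 1 - α by ring] at h2
    nlinarith
  -- conclude
  have hD := hf x₀ ⟨hx₀mem.1, hx₀b⟩
  have heq : Dright α (fun y => φ y) x₀ =
      (1 / Real.Gamma (-α)) * ∫ t in Set.Ioi x₀, g t := rfl
  rw [heq] at hD
  have h1Γ : 1 / Real.Gamma (-α) < 0 := div_neg_of_pos_of_neg one_pos hΓ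
  nlinarith [mul_neg_of_neg_of_pos h1Γ hpos]
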